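/- With λ_1,…,λ_M > 0, L > 0, σ_c² > 1, let R_s^s(p_s) = (M/L)∑_m log₂(1 + λ_m ζ_m^s) with water-filling ∑ ζ_m^s = L p_s against noise 1, and R_s^c(p_s) = (M/L)∑_m log₂(1 + λ_m ζ_m^c/σ_c²) with water-filling ∑ ζ_m^c = L p_s against noise σ_c². Then lim_{p_s→∞} (R_s^s(p_s) − R_s^c(p_s)) = (M²/L) log₂ σ_c² > 0. -/

import Mathlib

open Filter Topology

/-- If the water level is high enough that every channel is active, the
water-filling solution has the closed form `(L p + ∑ a)/M - a m`. -/
lemma active_wf {M : ℕ} (hM : 0 < M) {L p ν : ℝ} (hν : 0 < ν)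
    (a ζ : Fin M → ℝ) (ha : ∀ m, 0 < a m)
    (hform : ∀ m, ζ m = max 0 (1 / ν - a m)) (hsum : ∑ m, ζ m = L * p)
    (hp : ∀ m, a m < L * p / M) :
    ∀ m, ζ m = (L * p + ∑ m, a m) / M - a m := by
  have hMR : (0 : ℝ) < M := Nat.cast_pos.2 hM
  have hle : L * p ≤ M * (1 / ν) := by
    calc L * p = ∑ m, ζ m := hsum.symm
      _ ≤ ∑ _m : Fin M, 1 / ν := Finset.sum_le_sum (fun m _ => by
          rw [hform m]
          exact max_le (by positivity) (by linarith [(ha m).le]))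
      _ = M * (1 / ν) := by simp [Finset.sum_const, Finset.card_univ, mul_comm]
  have hlev : ∀ m, a m < 1 / ν := by
    intro m
    have h1 : L * p / M ≤ 1 / ν := by
      rw [div_le_iff₀ hMR]; linarith [hle]
    exact lt_of_lt_of_le (hp m) h1
  have hact : ∀ m, ζ m = 1 / ν - a m := fun m => by
    rw [hform m]; exact max_eq_right (by linarith [hlev m])
  have hsum2 : M * (1 / ν) - ∑ m, a m = L * p := by
    rw [← hsum, Finset.sum_congr rfl (fun m _ => hact m), Finset.sum_sub_distrib]
    simp [Finset.sum_const, Finset.card_univ, mul_comm]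
  have h1ν : 1 / ν = (L * p + ∑ m, a m) / M := by
    rw [eq_div_iff hMR.ne']
    linarith [hsum2]
  intro m
  rw [hact m, h1ν]

/-- The uplink SR gap between S-C and C-C SIC orderings converges to
`(M²/L) log₂ σ_c² > 0` as the sensing power grows. -/
theorem stmt_16 (M : ℕ) (hM : 0 < M) (L : ℝ) (hL : 0 < L)
    (lam : Fin M → ℝ) (hlam : ∀ m, 0 < lam m)
    (σc2 : ℝ) (hσc2 : 1 < σc2)
    (ζs ζc : ℝ → Fin M → ℝ)
    (hζs : ∀ p > (0 : ℝ), ∃ ν > (0 : ℝ),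
      (∀ m, ζs p m = max 0 (1 / ν - 1 / lam m)) ∧ ∑ m, ζs p m = L * p)
    (hζc : ∀ p > (0 : ℝ), ∃ ν > (0 : ℝ),
      (∀ m, ζc p m = max 0 (1 / ν - σc2 / lam m)) ∧ ∑ m, ζc p m = L * p) :
    Tendsto
      (fun p : ℝ =>
        (M : ℝ) / L * ∑ m, Real.logb 2 (1 + lam m * ζs p m)
          - (M : ℝ) / L * ∑ m, Real.logb 2 (1 + lam m * ζc p m / σc2))
      atTop (𝓝 ((M : ℝ) ^ 2 / L * Real.logb 2 σc2))
    ∧ 0 < (M : ℝ) ^ 2 / L * Real.logb 2 σc2 := by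
  have hMR : (0 : ℝ) < M := Nat.cast_pos.2 hM
  have hσpos : (0 : ℝ) < σc2 := lt_trans one_pos hσc2
  set S1 : ℝ := ∑ m, 1 / lam m with hS1def
  have hS1 : 0 ≤ S1 := Finset.sum_nonneg fun m _ => (one_div_pos.2 (hlam m)).le
  have hcS : ∑ m, σc2 / lam m = σc2 * S1 := by
    rw [hS1def, Finset.mul_sum]
    exact Finset.sum_congr rfl fun m _ => (mul_one_div _ _).symm
  constructor
  · -- the limit
    have hLpM : Tendsto (fun p : ℝ => L * p / M) atTop atTop :=
      (Tendsto.const_mul_atTop hL tendsto_id).atTop_div_const hMR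
    -- eventual closed form
    have hev : (fun p : ℝ =>
        (M : ℝ) / L * ∑ m, Real.logb 2 (1 + lam m * ζs p m)
          - (M : ℝ) / L * ∑ m, Real.logb 2 (1 + lam m * ζc p m / σc2))
        =ᶠ[atTop] fun p =>
          (M : ℝ) ^ 2 / L * Real.logb 2 (σc2 * (L * p + S1) / (L * p + σc2 * S1)) := by
      filter_upwards [eventually_gt_atTop (0 : ℝ),
        eventually_all.2 fun m => hLpM.eventually_gt_atTop (σc2 / lam m)] with p hp0 hpm
      obtain ⟨ν, hν, hform, hsum⟩ := hζs p hp0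
      obtain ⟨ν', hν', hform', hsum'⟩ := hζc p hp0
      have hps : ∀ m, 1 / lam m < L * p / M := by
        intro m
        refine lt_trans ?_ (hpm m)
        gcongr
        exact hlam m
      have hs := active_wf hM hν (fun m => 1 / lam m) (ζs p)
        (fun m => one_div_pos.2 (hlam m)) hform hsum hps
      have hc := active_wf hM hν' (fun m => σc2 / lam m) (ζc p)
        (fun m => div_pos hσpos (hlam m)) hform' hsum' hpm
      have hLp : 0 < L * p := mul_pos hL hp0
      set A : ℝ := (L * p + S1) / M with hAdef
      set B : ℝ := (L * p + σc2 * S1) / (M * σc2) with hBdef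
      have hApos : 0 < A := div_pos (by linarith) hMR
      have hBpos : 0 < B := div_pos (by nlinarith) (by positivity)
      have h1 : ∀ m, 1 + lam m * ζs p m = lam m * A := by
        intro m
        rw [hs m, hAdef]
        field_simp [(hlam m).ne']
        ring
      have h2 : ∀ m, 1 + lam m * ζc p m / σc2 = lam m * B := by
        intro m
        rw [hc m, hBdef, hcS]
        field_simp [(hlam m).ne']
        ring
      have hsumA : ∑ m, Real.logb 2 (1 + lam m * ζs p m)
          = (∑ m, Real.logb 2 (lam m)) + M * Real.logb 2 A := by
        rw [Finset.sum_congr rfl (fun m _ => by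
          rw [h1 m, Real.logb_mul (hlam m).ne' hApos.ne'])]
        rw [Finset.sum_add_distrib]
        simp [Finset.sum_const, Finset.card_univ, mul_comm]
      have hsumB : ∑ m, Real.logb 2 (1 + lam m * ζc p m / σc2)
          = (∑ m, Real.logb 2 (lam m)) + M * Real.logb 2 B := by
        rw [Finset.sum_congr rfl (fun m _ => by
          rw [h2 m, Real.logb_mul (hlam m).ne' hBpos.ne'])]
        rw [Finset.sum_add_distrib]
        simp [Finset.sum_const, Finset.card_univ, mul_comm]
      have hdpos : 0 < L * p + σc2 * S1 := by nlinarith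
      have hAB : A / B = σc2 * (L * p + S1) / (L * p + σc2 * S1) := by
        rw [hAdef, hBdef]
        field_simp
      rw [hsumA, hsumB, ← hAB, Real.logb_div hApos.ne' hBpos.ne']
      ring
    refine Tendsto.congr' hev.symm ?_
    have hden : Tendsto (fun p : ℝ => L * p + σc2 * S1) atTop atTop :=
      tendsto_atTop_add_const_right _ _ (Tendsto.const_mul_atTop hL tendsto_id)
    have h0 : Tendsto (fun p : ℝ => (S1 - σc2 * S1) / (L * p + σc2 * S1)) atTop (𝓝 0) :=
      Tendsto.div_atTop tendsto_const_nhds hden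
    have hr : Tendsto (fun p : ℝ => σc2 * (L * p + S1) / (L * p + σc2 * S1)) atTop (𝓝 σc2) := by
      have h1 : Tendsto (fun p : ℝ => σc2 * (1 + (S1 - σc2 * S1) / (L * p + σc2 * S1)))
          atTop (𝓝 (σc2 * (1 + 0))) := tendsto_const_nhds.mul (tendsto_const_nhds.add h0)
      rw [add_zero, mul_one] at h1
      refine Tendsto.congr' ?_ h1
      filter_upwards [hden.eventually_gt_atTop 0] with p hp
      field_simp
      ring
    have hlogb : Tendsto (fun p : ℝ => Real.logb 2 (σc2 * (L * p + S1) / (L * p + σc2 * S1)))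
        atTop (𝓝 (Real.logb 2 σc2)) := (Real.continuousAt_logb hσpos.ne').tendsto.comp hr
    exact hlogb.const_mul _
  · exact mul_pos (div_pos (pow_pos hMR 2) hL) (Real.logb_pos one_lt_two hσc2)
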